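/- If every route in a solution of the vehicle routing master problem is TSP-optimal, then for every TSP-violating path P the solution satisfies the TSP-optimality cut: the sum over arcs a ∈ A(P) of the total flow x_a = Σ_{r : a ∈ r} x_r is at most |A(P)| - 1, where x_r ∈ {0,1} indicates whether route r is selected and routes are arc-disjoint in the sense that each customer is visited exactly once. -/

import Mathlib

variable {V : Type*}

/-- The list of arcs (consecutive node pairs) of a node list. -/
def arcsOf (l : List V) : List (V × V) := l.zip l.tail

/-- The length of a path given as a node list: the sum of its arc distances. -/
def plen (d : V → V → ℝ) (l : List V) : ℝ :=
  ((arcsOf l).map (fun a => d a.1 a.2)).sum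

/-- A path is TSP-violating if some path on the same node set with
the same endpoints is strictly shorter. -/
def TSPviolating (d : V → V → ℝ) (P : List V) : Prop :=
  ∃ Q : List V, Q.Perm P ∧ Q.head? = P.head? ∧ Q.getLast? = P.getLast? ∧
    plen d Q < plen d P

/-- Length of the route visiting customers `c` in order,
starting and ending at the depot. -/
def routeLen (d : V → V → ℝ) (depot : V) (c : List V) : ℝ :=
  plen d (depot :: c ++ [depot])

/-- A route (given by its ordered customer list) is TSP-optimal:
no reordering of its customers gives a strictly shorter route. -/
def TSPopt (d : V → V → ℝ) (depot : V) (c : List V) : Prop :=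
  ∀ c' : List V, c'.Perm c → routeLen d depot c ≤ routeLen d depot c'

/-- Arc flow of a set of selected routes: the number of selected routes using arc `a`. -/
def flow [DecidableEq V] (depot : V) (routes : List (List V)) (a : V × V) : ℤ :=
  (routes.map (fun c => ((arcsOf (depot :: c ++ [depot])).count a : ℤ))).sum

section Aux

variable {V : Type*}

lemma arcsOf_nil' : arcsOf ([] : List V) = [] := rfl
lemma arcsOf_single (a : V) : arcsOf [a] = [] := rfl
lemma arcsOf_cons_cons (a b : V) (t : List V) :
    arcsOf (a :: b :: t) = (a, b) :: arcsOf (b :: t) := rfl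

/-- glue cost between two lists. -/
noncomputable def glue (d : V → V → ℝ) (X Y : List V) : ℝ :=
  ((X.getLast?.bind fun a => Y.head?.map fun b => d a b).getD 0)

lemma glue_congr (d : V → V → ℝ) {X X' Y Y' : List V}
    (h1 : X.getLast? = X'.getLast?) (h2 : Y.head? = Y'.head?) :
    glue d X Y = glue d X' Y' := by simp [glue, h1, h2]

lemma glue_nil_left (d : V → V → ℝ) (Y : List V) : glue d [] Y = 0 := rfl

lemma glue_nil_right (d : V → V → ℝ) (X : List V) : glue d X [] = 0 := by
  cases h : X.getLast? <;> simp [glue, h]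

lemma plen_nil (d : V → V → ℝ) : plen d ([] : List V) = 0 := rfl
lemma plen_single (d : V → V → ℝ) (a : V) : plen d [a] = 0 := rfl

lemma plen_cons (d : V → V → ℝ) (a : V) (Z : List V) :
    plen d (a :: Z) = glue d [a] Z + plen d Z := by
  cases Z with
  | nil => simp [plen, glue, arcsOf]
  | cons b Z' => simp [plen, glue, arcsOf_cons_cons]

lemma plen_append (d : V → V → ℝ) (X Y : List V) :
    plen d (X ++ Y) = plen d X + glue d X Y + plen d Y := by
  induction X with
  | nil => simp [plen_nil, glue_nil_left]
  | cons a X' ih =>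
    cases X' with
    | nil =>
      simp only [List.nil_append, List.singleton_append, plen_cons, plen_single,
        plen_nil, glue_nil_right]
      ring
    | cons w X'' =>
      have hL : plen d ((a :: w :: X'') ++ Y) = d a w + plen d ((w :: X'') ++ Y) := by
        simp [plen, arcsOf_cons_cons]
      have hR : plen d (a :: w :: X'') = d a w + plen d (w :: X'') := by
        simp [plen, arcsOf_cons_cons]
      have hg : glue d (a :: w :: X'') Y = glue d (w :: X'') Y :=
        glue_congr d (by simp) rfl
      rw [hL, ih, hR, hg]; ring

lemma count_zip_snd [DecidableEq V] (u v : V) (X : List V) :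
    ∀ (Y : List V), ((X.zip Y).count (u, v)) ≤ Y.count v := by
  induction X with
  | nil => intro Y; simp
  | cons x X' ih =>
    intro Y
    cases Y with
    | nil => simp
    | cons y Y' =>
      have h := ih Y'
      rw [List.zip_cons_cons, List.count_cons, List.count_cons]
      simp only [beq_iff_eq]
      by_cases hvy : (x, y) = (u, v)
      · obtain ⟨rfl, rfl⟩ := Prod.mk.injEq _ _ _ _ ▸ hvy
        simp only [if_pos rfl]
        omega
      · rw [if_neg hvy]
        split <;> omega

lemma count_zip_fst [DecidableEq V] (u v : V) (X : List V) :
    ∀ (Y : List V), ((X.zip Y).count (u, v)) ≤ X.count u := by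
  induction X with
  | nil => intro Y; simp
  | cons x X' ih =>
    intro Y
    cases Y with
    | nil => simp
    | cons y Y' =>
      have h := ih Y'
      rw [List.zip_cons_cons, List.count_cons, List.count_cons]
      simp only [beq_iff_eq]
      by_cases hvy : (x, y) = (u, v)
      · obtain ⟨rfl, rfl⟩ := Prod.mk.injEq _ _ _ _ ▸ hvy
        simp only [if_pos rfl]
        omega
      · rw [if_neg hvy]
        split <;> omega

lemma arc_ne_of_nodup {P : List V} (h : P.Nodup) {u v : V}
    (ha : (u, v) ∈ arcsOf P) : u ≠ v := by
  induction P with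
  | nil => simp [arcsOf] at ha
  | cons a t ih =>
    cases t with
    | nil => simp [arcsOf] at ha
    | cons b t' =>
      rw [arcsOf_cons_cons] at ha
      rcases List.mem_cons.mp ha with h1 | h1
      · obtain ⟨rfl, rfl⟩ := Prod.mk.injEq _ _ _ _ ▸ h1
        intro he
        exact (List.nodup_cons.mp h).1 (he ▸ List.mem_cons_self)
      · exact ih (List.nodup_cons.mp h).2 h1

lemma arcsOf_suffix_cons (a : V) (M : List V) : arcsOf M <:+ arcsOf (a :: M) := by
  cases M with
  | nil => exact List.nil_suffix
  | cons b t => rw [arcsOf_cons_cons]; exact List.suffix_cons _ _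

lemma arcsOf_suffix_append (A M : List V) : arcsOf M <:+ arcsOf (A ++ M) := by
  induction A with
  | nil => simp
  | cons a A' ih => exact ih.trans (arcsOf_suffix_cons a (A' ++ M))

lemma mem_arcsOf_decomp {x y : V} (l : List V) (h : (x, y) ∈ arcsOf l) :
    ∃ s t, l = s ++ x :: y :: t := by
  induction l with
  | nil => simp [arcsOf] at h
  | cons a r ih =>
    cases r with
    | nil => simp [arcsOf] at h
    | cons b r' =>
      rw [arcsOf_cons_cons] at h
      rcases List.mem_cons.mp h with h1 | h1
      · obtain ⟨rfl, rfl⟩ := Prod.mk.injEq _ _ _ _ ▸ h1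
        exact ⟨[], r', rfl⟩
      · obtain ⟨s, t, hst⟩ := ih h1
        exact ⟨a :: s, t, by rw [List.cons_append, ← hst]⟩

lemma uniq_snd {y x w : V} (l : List V) (hnd : l.tail.Nodup)
    (hx : (x, y) ∈ arcsOf l) (hw : (w, y) ∈ arcsOf l) : x = w := by
  induction l with
  | nil => simp [arcsOf] at hx
  | cons a r ih =>
    cases r with
    | nil => simp [arcsOf] at hx
    | cons b r' =>
      rw [arcsOf_cons_cons] at hx hw
      simp only [List.tail_cons] at hnd
      have hbr : b ∉ r' := (List.nodup_cons.mp hnd).1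
      rcases List.mem_cons.mp hx with h1 | h1 <;> rcases List.mem_cons.mp hw with h2 | h2
      · obtain ⟨rfl, -⟩ := Prod.mk.injEq _ _ _ _ ▸ h1
        obtain ⟨rfl, -⟩ := Prod.mk.injEq _ _ _ _ ▸ h2
        rfl
      · obtain ⟨rfl, rfl⟩ := Prod.mk.injEq _ _ _ _ ▸ h1
        exact absurd (List.of_mem_zip h2).2 hbr
      · obtain ⟨rfl, rfl⟩ := Prod.mk.injEq _ _ _ _ ▸ h2
        exact absurd (List.of_mem_zip h1).2 hbr
      · exact ih (by simpa using (List.nodup_cons.mp hnd).2) h1 h2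

lemma all_ge_one (L : List (V × V)) (f : V × V → ℤ)
    (hub : ∀ a ∈ L, f a ≤ 1) (hs : (L.length : ℤ) ≤ (L.map f).sum) :
    ∀ a ∈ L, 1 ≤ f a := by
  induction L with
  | nil => simp
  | cons b L' ih =>
    have hub' : ∀ a ∈ L', f a ≤ 1 := fun a ha => hub a (List.mem_cons_of_mem _ ha)
    have hsum' : (L'.map f).sum ≤ (L'.length : ℤ) := by
      have := List.sum_le_card_nsmul (L'.map f) 1
        (by intro x hx; obtain ⟨a, ha, rfl⟩ := List.mem_map.mp hx; exact hub' a ha)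
      simpa using this
    simp only [List.map_cons, List.sum_cons, List.length_cons] at hs
    push_cast at hs
    intro a ha
    rcases List.mem_cons.mp ha with rfl | ha'
    · linarith
    · have hfb : f b ≤ 1 := hub b (List.mem_cons_self)
      exact ih hub' (by linarith) a ha'

lemma exists_pos_of_sum (L : List (List V)) (f : List V → ℤ)
    (hnn : ∀ a ∈ L, 0 ≤ f a) (hs : 1 ≤ (L.map f).sum) :
    ∃ a ∈ L, 1 ≤ f a := by
  by_contra hc
  push_neg at hc
  have : (L.map f).sum ≤ 0 := by
    have := List.sum_le_card_nsmul (L.map f) 0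
      (by intro x hx; obtain ⟨a, ha, rfl⟩ := List.mem_map.mp hx
          have := hc a ha; omega)
    simpa using this
  omega

lemma decomp2 {a b : V} (Z : List V) (h2 : 2 ≤ Z.length)
    (hh : Z.head? = some a) (hl : Z.getLast? = some b) :
    ∃ m, Z = a :: m ++ [b] := by
  cases Z with
  | nil => simp at h2
  | cons a' r =>
    rcases r.eq_nil_or_concat with rfl | ⟨m, b', rfl⟩
    · simp at h2
    · refine ⟨m, ?_⟩
      have ha : a' = a := by simpa using hh
      have hb : b' = b := by
        have hgl : (a' :: m.concat b').getLast? = some b' := by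
          rw [List.concat_eq_append,
            show a' :: (m ++ [b']) = (a' :: m) ++ [b'] by simp, List.getLast?_concat]
        rw [hgl] at hl; simpa using hl
      rw [List.concat_eq_append, ha, hb]; simp

end Aux
section Aux2

variable {V : Type*}

lemma two_le_sum {α : Type*} (f : α → ℤ) (hf : ∀ x, 0 ≤ f x) :
    ∀ (L : List α) (a b : α), a ≠ b → a ∈ L → b ∈ L → f a + f b ≤ (L.map f).sum := by
  intro L
  induction L with
  | nil => simp
  | cons x L' ih =>
    intro a b hne ha hb
    simp only [List.map_cons, List.sum_cons]
    have hnnsum : ∀ y ∈ L'.map f, (0:ℤ) ≤ y := by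
      intro y hy; obtain ⟨z, _, rfl⟩ := List.mem_map.mp hy; exact hf z
    rcases List.mem_cons.mp ha with rfl | ha' <;> rcases List.mem_cons.mp hb with rfl | hb'
    · exact absurd rfl hne
    · have h1 : f b ≤ (L'.map f).sum :=
        List.single_le_sum hnnsum _ (List.mem_map.mpr ⟨b, hb', rfl⟩)
      linarith
    · have h1 : f a ≤ (L'.map f).sum :=
        List.single_le_sum hnnsum _ (List.mem_map.mpr ⟨a, ha', rfl⟩)
      linarith
    · have h1 := ih a b hne ha' hb'
      have h2 := hf x
      linarith

lemma route_unique [DecidableEq V] (depot : V) (routes : List (List V))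
    (hcover : ∀ v : V, v ≠ depot → (routes.map (fun c => (c.count v : ℤ))).sum = 1)
    {v : V} {c1 c2 : List V} (hv : v ≠ depot) (h1 : c1 ∈ routes) (hv1 : v ∈ c1)
    (h2 : c2 ∈ routes) (hv2 : v ∈ c2) : c1 = c2 := by
  by_contra hne
  have hsum := hcover v hv
  have e1 : (1 : ℤ) ≤ (c1.count v : ℤ) := by
    exact_mod_cast List.count_pos_iff.mpr hv1
  have e2 : (1 : ℤ) ≤ (c2.count v : ℤ) := by
    exact_mod_cast List.count_pos_iff.mpr hv2
  have := two_le_sum (fun c => ((c.count v : ℤ))) (fun c => by positivity)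
    routes c1 c2 hne h1 h2
  omega

lemma mem_route_of_arc {depot u v : V} {c : List V} (hdc : depot ∉ c)
    (hne : v ≠ depot) (ha : (u, v) ∈ arcsOf (depot :: c ++ [depot])) : v ∈ c := by
  have := (List.of_mem_zip ha).2
  simp only [List.cons_append, List.tail_cons] at this
  rcases List.mem_append.mp this with h | h
  · exact h
  · simp at h; exact absurd h hne

lemma mem_route_of_arc_fst {depot u v : V} {c : List V} (hdc : depot ∉ c)
    (hne : u ≠ depot) (ha : (u, v) ∈ arcsOf (depot :: c ++ [depot])) : u ∈ c := by
  have := (List.of_mem_zip ha).1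
  rcases List.mem_cons.mp this with h | h
  · exact absurd h hne
  · rcases List.mem_append.mp h with h | h
    · exact h
    · simp at h; exact absurd h hne

lemma chain_lemma [DecidableEq V] (depot : V) (routes : List (List V))
    (hdep : ∀ c ∈ routes, depot ∉ c)
    (hcover : ∀ v : V, v ≠ depot → (routes.map (fun c => (c.count v : ℤ))).sum = 1) :
    ∀ (t : List V) (x y : V),
      (∀ a ∈ arcsOf (x :: y :: t), ∃ c ∈ routes, a ∈ arcsOf (depot :: c ++ [depot])) →
      depot ∉ (y :: t).dropLast →
      ∃ c ∈ routes, ∀ a ∈ arcsOf (x :: y :: t), a ∈ arcsOf (depot :: c ++ [depot]) := by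
  intro t
  induction t with
  | nil =>
    intro x y h _
    obtain ⟨c, hc, hac⟩ := h (x, y) (by rw [arcsOf_cons_cons]; exact List.mem_cons_self)
    refine ⟨c, hc, ?_⟩
    intro a ha
    rw [arcsOf_cons_cons] at ha
    rcases List.mem_cons.mp ha with rfl | ha'
    · exact hac
    · simp [arcsOf] at ha'
  | cons z t' ih =>
    intro x y h hdm
    have hdm' : depot ∉ (z :: t').dropLast := by
      intro hmem
      exact hdm (by rw [List.dropLast_cons₂]; exact List.mem_cons_of_mem _ hmem)
    have hy_ne : y ≠ depot := by
      intro he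
      exact hdm (by rw [List.dropLast_cons₂, ← he]; exact List.mem_cons_self)
    obtain ⟨c2, hc2, hall⟩ := ih y z
      (fun a ha => h a (by rw [arcsOf_cons_cons]; exact List.mem_cons_of_mem _ ha)) hdm'
    obtain ⟨c1, hc1, hxy⟩ := h (x, y)
      (by rw [arcsOf_cons_cons]; exact List.mem_cons_self)
    have hy1 : y ∈ c1 := mem_route_of_arc (hdep c1 hc1) hy_ne hxy
    have hy2 : y ∈ c2 := by
      have hyz : (y, z) ∈ arcsOf (depot :: c2 ++ [depot]) :=
        hall (y, z) (by rw [arcsOf_cons_cons]; exact List.mem_cons_self)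
      exact mem_route_of_arc_fst (hdep c2 hc2) hy_ne hyz
    obtain rfl : c1 = c2 := route_unique depot routes hcover hy_ne hc1 hy1 hc2 hy2
    refine ⟨c1, hc1, ?_⟩
    intro a ha
    rw [arcsOf_cons_cons] at ha
    rcases List.mem_cons.mp ha with rfl | ha'
    · exact hxy
    · exact hall a ha'

lemma infix_main {depot : V} {c : List V} (hndc : c.Nodup) (hdc : depot ∉ c) :
    ∀ (t : List V) (x y : V),
      (∀ a ∈ arcsOf (x :: y :: t), a ∈ arcsOf (depot :: c ++ [depot])) →
      depot ∉ (y :: t).dropLast →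
      (x :: y :: t) <:+: (depot :: c ++ [depot]) := by
  have hndt : (c ++ [depot]).Nodup := by
    simp [List.nodup_append, hndc, hdc]
    exact fun a ha h => hdc (h ▸ ha)
  intro t
  induction t with
  | nil =>
    intro x y h _
    obtain ⟨s, t2, hst⟩ := mem_arcsOf_decomp (depot :: c ++ [depot])
      (h (x, y) (by rw [arcsOf_cons_cons]; exact List.mem_cons_self))
    exact ⟨s, t2, by rw [hst]; simp⟩
  | cons z t' ih =>
    intro x y h hdm
    have hdm' : depot ∉ (z :: t').dropLast := by
      intro hmem
      exact hdm (by rw [List.dropLast_cons₂]; exact List.mem_cons_of_mem _ hmem)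
    have hy_ne : y ≠ depot := by
      intro he
      exact hdm (by rw [List.dropLast_cons₂, ← he]; exact List.mem_cons_self)
    have htail : (y :: z :: t') <:+: (depot :: c ++ [depot]) :=
      ih y z (fun a ha => h a (by rw [arcsOf_cons_cons]; exact List.mem_cons_of_mem _ ha)) hdm'
    obtain ⟨pre, suf, hps⟩ := htail
    have hpre : pre ≠ [] := by
      intro he
      subst he
      simp only [List.nil_append] at hps
      have : y = depot := by
        have := congrArg List.head? hps
        simpa using this
      exact hy_ne this
    obtain ⟨pre', w, rfl⟩ : ∃ L b, pre = L ++ [b] := by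
      rcases pre.eq_nil_or_concat with rfl | ⟨L, b, rfl⟩
      · exact absurd rfl hpre
      · exact ⟨L, b, by rw [List.concat_eq_append]⟩
    have hrearr : (pre' ++ [w]) ++ (y :: z :: t') ++ suf
        = pre' ++ (w :: y :: z :: (t' ++ suf)) := by simp
    have hwy : (w, y) ∈ arcsOf (depot :: c ++ [depot]) := by
      rw [← hps, hrearr]
      apply (arcsOf_suffix_append pre' _).subset
      rw [arcsOf_cons_cons]
      exact List.mem_cons_self
    have hxy : (x, y) ∈ arcsOf (depot :: c ++ [depot]) :=
      h (x, y) (by rw [arcsOf_cons_cons]; exact List.mem_cons_self)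
    obtain rfl : x = w := by
      apply uniq_snd (depot :: c ++ [depot]) _ hxy hwy
      simpa using hndt
    exact ⟨pre', suf, by rw [← hps]; simp⟩

end Aux2
lemma flow_le_one [DecidableEq V] (depot : V) (routes : List (List V))
    (hcover : ∀ v : V, v ≠ depot → (routes.map (fun c => (c.count v : ℤ))).sum = 1)
    {u v : V} (huv : u ≠ v) : flow depot routes (u, v) ≤ 1 := by
  by_cases hv : v = depot
  · rw [hv]
    have huv' : u ≠ depot := hv ▸ huv
    have hb : ∀ c ∈ routes, ((arcsOf (depot :: c ++ [depot])).count (u, depot) : ℤ)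
        ≤ (c.count u : ℤ) := by
      intro c hc
      have h1 : (arcsOf (depot :: c ++ [depot])).count (u, depot)
          ≤ (depot :: c ++ [depot]).count u :=
        count_zip_fst u depot _ _
      have h2 : (depot :: c ++ [depot]).count u = c.count u := by
        have hd : depot ≠ u := fun h => huv' h.symm
        simp [List.count_cons, List.count_append, hd]
      exact_mod_cast h1.trans_eq h2
    calc flow depot routes (u, depot)
        ≤ (routes.map (fun c => (c.count u : ℤ))).sum := List.sum_le_sum hb
      _ = 1 := hcover u huv'
  · have hb : ∀ c ∈ routes, ((arcsOf (depot :: c ++ [depot])).count (u, v) : ℤ)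
        ≤ (c.count v : ℤ) := by
      intro c hc
      have h1 : (arcsOf (depot :: c ++ [depot])).count (u, v)
          ≤ (depot :: c ++ [depot]).tail.count v :=
        count_zip_snd u v _ _
      have h2 : (depot :: c ++ [depot]).tail.count v = c.count v := by
        have hd : depot ≠ v := fun h => hv h.symm
        simp [List.count_append, List.count_cons, hd]
      exact_mod_cast h1.trans_eq h2
    calc flow depot routes (u, v)
        ≤ (routes.map (fun c => (c.count v : ℤ))).sum := List.sum_le_sum hb
      _ = 1 := hcover v hv
/-- if every route of a solution covering each customer exactly once is
TSP-optimal, then for every TSP-violating path `P` (with no depot as intermediate node)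
the TSP-optimality cut `∑_{a ∈ A(P)} x_a ≤ |A(P)| - 1` holds. -/
theorem tsp_optimality_cut_valid [DecidableEq V]
    (d : V → V → ℝ) (depot : V) (routes : List (List V))
    (hnd : ∀ c ∈ routes, c.Nodup) (hdep : ∀ c ∈ routes, depot ∉ c)
    (hne : ∀ c ∈ routes, c ≠ [])
    (hcover : ∀ v : V, v ≠ depot → (routes.map (fun c => (c.count v : ℤ))).sum = 1)
    (hsel : ∀ c ∈ routes, TSPopt d depot c)
    (P : List V) (hPnd : P.Nodup) (hPdep : depot ∉ (P.drop 1).dropLast)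
    (hviol : TSPviolating d P) :
    ((arcsOf P).map (flow depot routes)).sum ≤ ((arcsOf P).length : ℤ) - 1 := by
  obtain ⟨Q, hQperm, hQh, hQl, hQlt⟩ := hviol
  cases P with
  | nil =>
    obtain rfl := List.perm_nil.mp hQperm
    exact absurd hQlt (lt_irrefl _)
  | cons x P1 =>
    cases P1 with
    | nil =>
      obtain rfl := List.perm_singleton.mp hQperm
      exact absurd hQlt (lt_irrefl _)
    | cons y t =>
      by_contra hcon
      push_neg at hcon
      set L := arcsOf (x :: y :: t) with hL
      have hub : ∀ a ∈ L, flow depot routes a ≤ 1 := by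
        intro a ha
        obtain ⟨u, v⟩ := a
        exact flow_le_one depot routes hcover (arc_ne_of_nodup hPnd ha)
      have hge : ∀ a ∈ L, 1 ≤ flow depot routes a := by
        apply all_ge_one L _ hub
        have := Int.lt_iff_add_one_le.mp hcon
        linarith
      have harc : ∀ a ∈ L, ∃ c ∈ routes, a ∈ arcsOf (depot :: c ++ [depot]) := by
        intro a ha
        obtain ⟨c, hc, hcnt⟩ := exists_pos_of_sum routes
          (fun c => ((arcsOf (depot :: c ++ [depot])).count a : ℤ))
          (fun c _ => by positivity)
          (by have := hge a ha; unfold flow at this; exact this)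
        refine ⟨c, hc, ?_⟩
        have hpos : 0 < (arcsOf (depot :: c ++ [depot])).count a := by
          exact_mod_cast lt_of_lt_of_le zero_lt_one hcnt
        exact List.count_pos_iff.mp hpos
      have hPdep' : depot ∉ (y :: t).dropLast := by simpa using hPdep
      obtain ⟨c, hc, hallarc⟩ := chain_lemma depot routes hdep hcover t x y harc hPdep'
      have hinf : (x :: y :: t) <:+: (depot :: c ++ [depot]) :=
        infix_main (hnd c hc) (hdep c hc) t x y hallarc hPdep'
      obtain ⟨pre, suf, hps⟩ := hinf
      rw [List.append_assoc] at hps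
      have hQne : Q ≠ [] := by
        intro he; rw [he] at hQh; simp at hQh
      have hplen : ∀ R : List V, R.head? = (x :: y :: t).head? →
          R.getLast? = (x :: y :: t).getLast? →
          plen d (pre ++ (R ++ suf)) =
            plen d pre + glue d pre ((x :: y :: t) ++ suf) + plen d R
              + glue d (x :: y :: t) suf + plen d suf := by
        intro R hh hl
        rw [plen_append, plen_append]
        have g1 : glue d pre (R ++ suf) = glue d pre ((x :: y :: t) ++ suf) :=
          glue_congr d rfl (by rw [List.head?_append, List.head?_append, hh])
        have g2 : glue d R suf = glue d (x :: y :: t) suf := glue_congr d hl rfl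
        rw [g1, g2]; ring
      have hlt : plen d (pre ++ (Q ++ suf)) < plen d (pre ++ ((x :: y :: t) ++ suf)) := by
        rw [hplen Q hQh hQl, hplen (x :: y :: t) rfl rfl]
        linarith
      have hpermQ : List.Perm (pre ++ (Q ++ suf)) (pre ++ ((x :: y :: t) ++ suf)) :=
        (hQperm.append_right suf).append_left pre
      have hlen : 2 ≤ (pre ++ (Q ++ suf)).length := by
        rw [hpermQ.length_eq, hps]
        simp
      have hhead : (pre ++ (Q ++ suf)).head? = some depot := by
        have h1 : (pre ++ ((x :: y :: t) ++ suf)).head? = some depot := by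
          rw [hps]; rfl
        rw [List.head?_append, List.head?_append] at h1
        rw [List.head?_append, List.head?_append, hQh]
        exact h1
      have hlast : (pre ++ (Q ++ suf)).getLast? = some depot := by
        have h1 : (pre ++ ((x :: y :: t) ++ suf)).getLast? = some depot := by
          rw [hps, show depot :: c ++ [depot] = (depot :: c) ++ [depot] from rfl,
            List.getLast?_concat]
        rw [List.getLast?_append, List.getLast?_append] at h1
        rw [List.getLast?_append, List.getLast?_append, hQl]
        exact h1
      obtain ⟨m, hm⟩ := decomp2 (pre ++ (Q ++ suf)) hlen hhead hlast
      have hpermc : List.Perm m c := by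
        have h2 : List.Perm (depot :: m ++ [depot]) (depot :: c ++ [depot]) := by
          rw [← hm, ← hps]; exact hpermQ
        have h3 := h2.cons_inv
        have h4 : List.Perm (depot :: m) (depot :: c) :=
          ((List.perm_append_singleton depot m).symm.trans h3).trans
            (List.perm_append_singleton depot c)
        exact h4.cons_inv
      have hopt := hsel c hc m hpermc
      have hrm : routeLen d depot m = plen d (pre ++ (Q ++ suf)) := by
        unfold routeLen; rw [← hm]
      have hrc : routeLen d depot c = plen d (pre ++ ((x :: y :: t) ++ suf)) := by
        unfold routeLen; rw [← hps]
      rw [hrm, hrc] at hopt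
      linarith
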